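/- Let (X,Σ,m) be a σ-finite measure space, M a module over L^∞(m), and ‖·‖ a complete norm on M with p ∈ [1,∞) such that ‖1_E · v‖^p + ‖1_{X∖E} · v‖^p = ‖v‖^p for all E ∈ Σ, v ∈ M, and ‖f_n · v‖ → 0 whenever f_n ⇀ 0 weakly* in L^∞(m). Then for every v ∈ M and every sequence of pairwise disjoint sets (E_n) ⊆ Σ with union E, it holds that ‖1_E · v‖^p = Σ_n ‖1_{E_n} · v‖^p; in particular, E ↦ ‖1_E · v‖^p is a finite measure on Σ absolutely continuous with respect to m. -/

import Mathlib

open MeasureTheory Filter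
open scoped ENNReal

/-- A module structure over `L^∞(m)` on a real normed space `M`, encoded via a scalar
multiplication map `smul : L^∞(m) → M → M`; multiplication in `L^∞(m)` and constants are
expressed via a.e. representatives. -/
structure LinftyModuleStruct {X : Type*} [MeasurableSpace X] (m : Measure X)
    (M : Type*) [NormedAddCommGroup M] [Module ℝ M] where
  smul : Lp ℝ ∞ m → M → M
  smul_add : ∀ (f : Lp ℝ ∞ m) (u v : M), smul f (u + v) = smul f u + smul f v
  add_smul : ∀ (f g : Lp ℝ ∞ m) (v : M), smul (f + g) v = smul f v + smul g v
  mul_smul : ∀ (f g h : Lp ℝ ∞ m) (v : M),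
    ((h : X → ℝ) =ᵐ[m] fun x => f x * g x) → smul h v = smul f (smul g v)
  const_smul : ∀ (f : Lp ℝ ∞ m) (c : ℝ) (v : M),
    ((f : X → ℝ) =ᵐ[m] fun _ => c) → smul f v = c • v

/-- `pn` is an `L^p(m)`-pointwise norm on the `L^∞(m)`-module `M` inducing the norm of `M`. -/
structure IsPointwiseNorm {X : Type*} [MeasurableSpace X] (m : Measure X) (p : ℝ)
    {M : Type*} [NormedAddCommGroup M] [Module ℝ M]
    (A : LinftyModuleStruct m M) (pn : M → X → ℝ) : Prop where
  memLp : ∀ v : M, MemLp (pn v) (ENNReal.ofReal p) m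
  nonneg : ∀ v : M, ∀ᵐ x ∂m, 0 ≤ pn v x
  eq_zero_iff : ∀ v : M, (pn v =ᵐ[m] 0) ↔ v = 0
  triangle : ∀ v w : M, ∀ᵐ x ∂m, pn (v + w) x ≤ pn v x + pn w x
  smul_eq : ∀ (f : Lp ℝ ∞ m) (v : M), pn (A.smul f v) =ᵐ[m] fun x => |f x| * pn v x
  norm_eq : ∀ v : M, ‖v‖ = (∫ x, pn v x ^ p ∂m) ^ (1 / p)

section Aux

variable {X : Type*} [MeasurableSpace X] {m : Measure X}
variable {M : Type*} [NormedAddCommGroup M] [Module ℝ M]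

/-- The indicator of a measurable set as an element of `L^∞`. -/
noncomputable def indL (m : Measure X) {E : Set X} (hE : MeasurableSet E) : Lp ℝ ∞ m :=
  MemLp.toLp (E.indicator fun _ => (1 : ℝ))
    (memLp_top_of_bound ((measurable_const.indicator hE).aestronglyMeasurable) 1
      (ae_of_all _ fun x => by
        by_cases h : x ∈ E <;> simp [Set.indicator_apply, h]))

lemma indL_coe {E : Set X} (hE : MeasurableSet E) :
    (indL m hE : X → ℝ) =ᵐ[m] E.indicator fun _ => (1 : ℝ) :=
  MemLp.coeFn_toLp _

lemma smul_congr (A : LinftyModuleStruct m M) {f g : Lp ℝ ∞ m}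
    (h : (f : X → ℝ) =ᵐ[m] (g : X → ℝ)) (v : M) : A.smul f v = A.smul g v := by
  rw [Lp.ext h]

lemma smul_indL_congr (A : LinftyModuleStruct m M) {E F : Set X} (h : E = F)
    (hE : MeasurableSet E) (hF : MeasurableSet F) (v : M) :
    A.smul (indL m hE) v = A.smul (indL m hF) v := by
  subst h; rfl

/-- Binary additivity of `E ↦ ‖1_E · v‖^p` on disjoint sets. -/
lemma nu_union (p : ℝ) (A : LinftyModuleStruct m M)
    (ha : ∀ E : Set X, MeasurableSet E → ∀ (f g : Lp ℝ ∞ m) (v : M),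
      ((f : X → ℝ) =ᵐ[m] E.indicator fun _ => (1 : ℝ)) →
      ((g : X → ℝ) =ᵐ[m] Eᶜ.indicator fun _ => (1 : ℝ)) →
      ‖A.smul f v‖ ^ p + ‖A.smul g v‖ ^ p = ‖v‖ ^ p)
    {E F : Set X} (hE : MeasurableSet E) (hF : MeasurableSet F) (hd : Disjoint E F) (v : M) :
    ‖A.smul (indL m (hE.union hF)) v‖ ^ p
      = ‖A.smul (indL m hE) v‖ ^ p + ‖A.smul (indL m hF) v‖ ^ p := by
  set w := A.smul (indL m (hE.union hF)) v with hw
  have h1 : A.smul (indL m hE) v = A.smul (indL m hE) w := by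
    refine A.mul_smul _ _ _ v ?_
    filter_upwards [indL_coe (m := m) hE, indL_coe (m := m) (hE.union hF)] with x h1 h2
    rw [h1, h2]
    by_cases hx : x ∈ E
    · simp [Set.indicator_apply, hx, Set.mem_union, hx]
    · simp [Set.indicator_apply, hx]
  have h2 : A.smul (indL m hF) v = A.smul (indL m hE.compl) w := by
    refine A.mul_smul _ _ _ v ?_
    filter_upwards [indL_coe (m := m) hF, indL_coe (m := m) hE.compl,
      indL_coe (m := m) (hE.union hF)] with x h1 h2 h3
    rw [h1, h2, h3]
    by_cases hxF : x ∈ F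
    · have hxE : x ∉ E := fun hxE => Set.disjoint_left.mp hd hxE hxF
      simp [Set.indicator_apply, hxF, hxE, Set.mem_union]
    · by_cases hxE : x ∈ E
      · simp [Set.indicator_apply, hxF, hxE]
      · simp [Set.indicator_apply, hxF, hxE, Set.mem_union]
  rw [h1, h2]
  exact (ha E hE _ _ w (indL_coe hE) (indL_coe hE.compl)).symm

/-- Countable additivity of `E ↦ ‖1_E · v‖^p`. -/
lemma nu_hasSum (p : ℝ) (hp : 1 ≤ p) (A : LinftyModuleStruct m M)
    (ha : ∀ E : Set X, MeasurableSet E → ∀ (f g : Lp ℝ ∞ m) (v : M),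
      ((f : X → ℝ) =ᵐ[m] E.indicator fun _ => (1 : ℝ)) →
      ((g : X → ℝ) =ᵐ[m] Eᶜ.indicator fun _ => (1 : ℝ)) →
      ‖A.smul f v‖ ^ p + ‖A.smul g v‖ ^ p = ‖v‖ ^ p)
    (hb : ∀ (v : M) (f : ℕ → Lp ℝ ∞ m),
      (∀ g : X → ℝ, Integrable g m →
        Tendsto (fun n => ∫ x, (f n) x * g x ∂m) atTop (nhds 0)) →
      Tendsto (fun n => ‖A.smul (f n) v‖) atTop (nhds 0))
    (v : M) (Es : ℕ → Set X) (hEs : ∀ n, MeasurableSet (Es n))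
    (hd : Pairwise (Function.onFun Disjoint Es)) :
    HasSum (fun n => ‖A.smul (indL m (hEs n)) v‖ ^ p)
      (‖A.smul (indL m (MeasurableSet.iUnion hEs)) v‖ ^ p) := by
  have hp0 : 0 < p := lt_of_lt_of_le one_pos hp
  set U : Set X := ⋃ n, Es n with hU
  have hUmeas : MeasurableSet U := MeasurableSet.iUnion hEs
  set P : ℕ → Set X := fun n => ⋃ k ∈ Finset.range n, Es k with hP
  have hPmeas : ∀ n, MeasurableSet (P n) := fun n =>
    (Finset.range n).measurableSet_biUnion fun k _ => hEs k
  set D : ℕ → Set X := fun n => U \ P n with hD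
  have hDmeas : ∀ n, MeasurableSet (D n) := fun n => hUmeas.diff (hPmeas n)
  -- finite additivity
  have hfin : ∀ n, ∑ k ∈ Finset.range n, ‖A.smul (indL m (hEs k)) v‖ ^ p
      = ‖A.smul (indL m (hPmeas n)) v‖ ^ p := by
    intro n
    induction n with
    | zero =>
      simp only [Finset.sum_range_zero]
      have h0 : A.smul (indL m (hPmeas 0)) v = (0 : ℝ) • v := by
        refine A.const_smul _ 0 v ?_
        filter_upwards [indL_coe (m := m) (hPmeas 0)] with x h
        rw [h]; simp [hP]
      rw [h0, zero_smul, norm_zero, Real.zero_rpow hp0.ne']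
    | succ n ih =>
      have hset : P (n + 1) = P n ∪ Es n := by
        ext x
        simp only [hP, Set.mem_iUnion, Finset.mem_range, Set.mem_union,
          Nat.lt_succ_iff_lt_or_eq]
        constructor
        · rintro ⟨k, hk | rfl, hx⟩
          exacts [Or.inl ⟨k, hk, hx⟩, Or.inr hx]
        · rintro (⟨k, hk, hx⟩ | hx)
          exacts [⟨k, Or.inl hk, hx⟩, ⟨n, Or.inr rfl, hx⟩]
      have hdisj : Disjoint (P n) (Es n) := by
        refine Set.disjoint_left.mpr fun x hx hx' => ?_
        simp only [hP, Set.mem_iUnion, Finset.mem_range] at hx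
        obtain ⟨k, hk, hxk⟩ := hx
        exact Set.disjoint_left.mp (hd (Nat.ne_of_lt hk)) hxk hx'
      rw [Finset.sum_range_succ, ih,
        smul_indL_congr A hset (hPmeas (n + 1)) ((hPmeas n).union (hEs n)) v,
        nu_union p A ha (hPmeas n) (hEs n) hdisj v]
  -- splitting of U
  have hsplit : ∀ n, ‖A.smul (indL m hUmeas) v‖ ^ p
      = ‖A.smul (indL m (hPmeas n)) v‖ ^ p + ‖A.smul (indL m (hDmeas n)) v‖ ^ p := by
    intro n
    have hPU : P n ⊆ U := by
      intro x hx
      simp only [hP, Set.mem_iUnion, Finset.mem_range] at hx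
      obtain ⟨k, _, hxk⟩ := hx
      exact Set.mem_iUnion.mpr ⟨k, hxk⟩
    have hset : U = P n ∪ D n := by
      rw [hD]; simp [Set.union_diff_cancel hPU]
    rw [smul_indL_congr A hset hUmeas ((hPmeas n).union (hDmeas n)) v]
    exact nu_union p A ha (hPmeas n) (hDmeas n) (Set.disjoint_sdiff_right.mono_right le_rfl) v
  -- the tail tends to zero
  have htail : Tendsto (fun n => ‖A.smul (indL m (hDmeas n)) v‖ ^ p) atTop (nhds 0) := by
    have hnorm : Tendsto (fun n => ‖A.smul (indL m (hDmeas n)) v‖) atTop (nhds 0) := by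
      refine hb v (fun n => indL m (hDmeas n)) fun g hg => ?_
      have heq : ∀ n, ∫ x, (indL m (hDmeas n) : X → ℝ) x * g x ∂m
          = ∫ x, (D n).indicator (fun _ => (1 : ℝ)) x * g x ∂m := by
        intro n
        refine integral_congr_ae ?_
        filter_upwards [indL_coe (m := m) (hDmeas n)] with x h
        rw [h]
      simp only [heq]
      have := tendsto_integral_of_dominated_convergence (fun x => |g x|)
        (F := fun n x => (D n).indicator (fun _ => (1 : ℝ)) x * g x) (f := fun _ => (0 : ℝ))
        (fun n => ((measurable_const.indicator (hDmeas n)).aestronglyMeasurable.mul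
          hg.aestronglyMeasurable))
        (hg.abs)
        (fun n => ae_of_all _ fun x => by
          by_cases hx : x ∈ D n <;>
            simp [Set.indicator_apply, hx, abs_mul, abs_nonneg])
        (ae_of_all _ fun x => ?_)
      · simpa using this
      · -- pointwise convergence to 0
        by_cases hxU : x ∈ U
        · obtain ⟨k, hk⟩ := Set.mem_iUnion.mp hxU
          refine tendsto_nhds_of_eventually_eq ?_
          filter_upwards [eventually_ge_atTop (k + 1)] with n hn
          have : x ∉ D n := by
            intro hxD
            exact hxD.2 (by
              simp only [hP, Set.mem_iUnion, Finset.mem_range]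
              exact ⟨k, lt_of_lt_of_le (Nat.lt_succ_self k) hn, hk⟩)
          simp [Set.indicator_apply, this]
        · refine tendsto_nhds_of_eventually_eq (Eventually.of_forall fun n => ?_)
          have : x ∉ D n := fun hxD => hxU hxD.1
          simp [Set.indicator_apply, this]
    have hcont : Tendsto (fun t : ℝ => t ^ p) (nhds 0) (nhds ((0 : ℝ) ^ p)) :=
      (Real.continuousAt_rpow_const 0 p (Or.inr hp0.le)).tendsto
    have := hcont.comp hnorm
    rwa [Real.zero_rpow hp0.ne'] at this
  -- conclude
  rw [hasSum_iff_tendsto_nat_of_nonneg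
    (fun k => Real.rpow_nonneg (norm_nonneg _) p)]
  have : Tendsto (fun n => ‖A.smul (indL m hUmeas) v‖ ^ p
      - ‖A.smul (indL m (hDmeas n)) v‖ ^ p) atTop (nhds (‖A.smul (indL m hUmeas) v‖ ^ p - 0)) :=
    tendsto_const_nhds.sub htail
  rw [sub_zero] at this
  refine this.congr fun n => ?_
  rw [hfin n, hsplit n]; ring

end Aux

section Aux2

variable {X : Type*} [MeasurableSpace X] {m : Measure X}
variable {M : Type*} [NormedAddCommGroup M] [Module ℝ M]

lemma smul_indL_null (A : LinftyModuleStruct m M) {E : Set X} (hE : MeasurableSet E)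
    (hE0 : m E = 0) (v : M) : A.smul (indL m hE) v = 0 := by
  have h : (indL m hE : X → ℝ) =ᵐ[m] fun _ => (0 : ℝ) := by
    have hae : ∀ᵐ x ∂m, x ∉ E := (ae_iff.mpr (by simpa using hE0))
    filter_upwards [indL_coe (m := m) hE, hae] with x h hx
    simp [h, Set.indicator_apply, hx]
  rw [A.const_smul _ 0 v h, zero_smul]

end Aux2

/-- Under the hypotheses of the pointwise-norm criterion (indicator splitting and weak*
sequential continuity), the set function `E ↦ ‖1_E · v‖^p` is countably additive; in
particular it extends to a finite measure on `Σ` absolutely continuous w.r.t. `m`. -/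
theorem norm_pow_indicator_countably_additive
    {X : Type*} [MeasurableSpace X] (m : Measure X) [SigmaFinite m]
    {M : Type*} [NormedAddCommGroup M] [Module ℝ M] [CompleteSpace M]
    (p : ℝ) (hp : 1 ≤ p)
    (A : LinftyModuleStruct m M)
    (ha : ∀ E : Set X, MeasurableSet E → ∀ (f g : Lp ℝ ∞ m) (v : M),
      ((f : X → ℝ) =ᵐ[m] E.indicator fun _ => (1 : ℝ)) →
      ((g : X → ℝ) =ᵐ[m] Eᶜ.indicator fun _ => (1 : ℝ)) →
      ‖A.smul f v‖ ^ p + ‖A.smul g v‖ ^ p = ‖v‖ ^ p)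
    (hb : ∀ (v : M) (f : ℕ → Lp ℝ ∞ m),
      (∀ g : X → ℝ, Integrable g m →
        Tendsto (fun n => ∫ x, (f n) x * g x ∂m) atTop (nhds 0)) →
      Tendsto (fun n => ‖A.smul (f n) v‖) atTop (nhds 0))
    (v : M) :
    (∀ (Es : ℕ → Set X), (∀ n, MeasurableSet (Es n)) →
      Pairwise (Function.onFun Disjoint Es) →
      ∀ (f : Lp ℝ ∞ m) (fn : ℕ → Lp ℝ ∞ m),
        ((f : X → ℝ) =ᵐ[m] (⋃ n, Es n).indicator fun _ => (1 : ℝ)) →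
        (∀ n, ((fn n : X → ℝ)) =ᵐ[m] (Es n).indicator fun _ => (1 : ℝ)) →
        ‖A.smul f v‖ ^ p = ∑' n, ‖A.smul (fn n) v‖ ^ p) ∧
    (∃ μ : Measure X, IsFiniteMeasure μ ∧ μ ≪ m ∧
      ∀ E : Set X, MeasurableSet E → ∀ f : Lp ℝ ∞ m,
        ((f : X → ℝ) =ᵐ[m] E.indicator fun _ => (1 : ℝ)) →
        μ E = ENNReal.ofReal (‖A.smul f v‖ ^ p)) := by
  have hp0 : 0 < p := lt_of_lt_of_le one_pos hp
  constructor
  · intro Es hEs hd f fn hf hfn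
    have hsum := nu_hasSum p hp A ha hb v Es hEs hd
    have h1 : A.smul f v = A.smul (indL m (MeasurableSet.iUnion hEs)) v :=
      smul_congr A (hf.trans (indL_coe _).symm) v
    have h2 : ∀ n, A.smul (fn n) v = A.smul (indL m (hEs n)) v := fun n =>
      smul_congr A ((hfn n).trans (indL_coe _).symm) v
    rw [h1]
    simp only [h2]
    exact hsum.tsum_eq.symm
  · have h0 : ENNReal.ofReal (‖A.smul (indL m MeasurableSet.empty) v‖ ^ p) = 0 := by
      rw [smul_indL_null A MeasurableSet.empty (measure_empty) v, norm_zero,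
        Real.zero_rpow hp0.ne', ENNReal.ofReal_zero]
    have hUadd : ∀ ⦃Es : ℕ → Set X⦄ (h : ∀ i, MeasurableSet (Es i)),
        Pairwise (Function.onFun Disjoint Es) →
        ENNReal.ofReal (‖A.smul (indL m (MeasurableSet.iUnion h)) v‖ ^ p)
          = ∑' i, ENNReal.ofReal (‖A.smul (indL m (h i)) v‖ ^ p) := by
      intro Es hEs hd
      have hsum := nu_hasSum p hp A ha hb v Es hEs hd
      rw [← hsum.tsum_eq]
      exact ENNReal.ofReal_tsum_of_nonneg
        (fun n => Real.rpow_nonneg (norm_nonneg _) p) hsum.summable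
    refine ⟨Measure.ofMeasurable
      (fun s hs => ENNReal.ofReal (‖A.smul (indL m hs) v‖ ^ p)) h0 hUadd, ?_, ?_, ?_⟩
    · refine ⟨?_⟩
      rw [Measure.ofMeasurable_apply _ MeasurableSet.univ]
      exact ENNReal.ofReal_lt_top
    · refine Measure.AbsolutelyContinuous.mk fun s hs hs0 => ?_
      rw [Measure.ofMeasurable_apply _ hs, smul_indL_null A hs hs0 v, norm_zero,
        Real.zero_rpow hp0.ne', ENNReal.ofReal_zero]
    · intro E hE f hf
      rw [Measure.ofMeasurable_apply _ hE,
        smul_congr A (hf.trans (indL_coe _).symm) v]
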